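/- For every k ≥ 1, the conditional expectation of the identity given the set A_k = ∪_{j=k}^∞ J_j equals 1 − (1/2)·3^{−(k−1)}; that is, (∫_{A_k} x dP(x)) / P(A_k) = 1 − 1/(2·3^{k−1}). -/

import Mathlib

open MeasureTheory Set
open scoped ENNReal

noncomputable section

/-- The similarity map `S_j(x) = x/3^j + 1 - 1/3^(j-1)`. -/
def Smap (j : ℕ) (x : ℝ) : ℝ := x / 3 ^ j + 1 - 1 / 3 ^ (j - 1)

/-- The similarity ratio `s_j = 3^(-j)`. -/
def srat (j : ℕ) : ℝ := (3 : ℝ)⁻¹ ^ j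

/-- The probability `p_j = 2^(-j)`. -/
def prob (j : ℕ) : ℝ := (2 : ℝ)⁻¹ ^ j

/-- `J_j = S_j([0,1])`. -/
def Jset (j : ℕ) : Set ℝ := Smap j '' Set.Icc 0 1

/-- For a word `ω = ω₁⋯ω_n`, `S_ω = S_{ω₁} ∘ ⋯ ∘ S_{ω_n}`. -/
def Sword : List ℕ → ℝ → ℝ
  | [] => id
  | j :: ω => Smap j ∘ Sword ω

/-- `s_ω = s_{ω₁} ⋯ s_{ω_n}`. -/
def sword (ω : List ℕ) : ℝ := (ω.map srat).prod

/-- `p_ω = p_{ω₁} ⋯ p_{ω_n}`. -/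
def pword (ω : List ℕ) : ℝ := (ω.map prob).prod

/-- `J_ω = S_ω([0,1])`. -/
def Jword (ω : List ℕ) : Set ℝ := Sword ω '' Set.Icc 0 1

/-- `ω⁻(ω_{|ω|} + j)` : the word obtained from `ω` by increasing its last letter by `j`. -/
def wordInc (ω : List ℕ) (j : ℕ) : List ℕ := ω.dropLast ++ [ω.getLastD 1 + j]

/-- `a(ω) = S_ω(1/2)`. -/
def aw (ω : List ℕ) : ℝ := Sword ω (1 / 2)

/-- `a(ω, ∞) = S_{ω⁻(ω_{|ω|}+1)}(1/2) + s_{ω⁻(ω_{|ω|}+1)}`. -/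
def awInf (ω : List ℕ) : ℝ := Sword (wordInc ω 1) (1 / 2) + sword (wordInc ω 1)

/-- `J_{(ω,∞)} = ⋃_{j ≥ 1} J_{ω⁻(ω_{|ω|}+j)}`. -/
def JwordInf (ω : List ℕ) : Set ℝ := ⋃ j : ℕ, Jword (wordInc ω (j + 1))

/-- A (nonempty) word over the alphabet `ℕ = {1, 2, 3, …}`. -/
def IsWord (ω : List ℕ) : Prop := ω ≠ [] ∧ ∀ i ∈ ω, 1 ≤ i

/-- The self-similarity equation `P = ∑_{j=1}^∞ 2^{-j} · P ∘ S_j^{-1}`. -/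
def SelfSim (P : Measure ℝ) : Prop :=
  P = Measure.sum fun j : ℕ => ((2 : ℝ≥0∞) ^ (j + 1))⁻¹ • P.map (Smap (j + 1))

/-- The distortion error `∫ min_{a ∈ A} (x - a)² dP(x)` of a set `A` of points. -/
def err (P : Measure ℝ) (A : Set ℝ) : ℝ :=
  ∫ x, sInf ((fun a => (x - a) ^ 2) '' A) ∂P

/-- The `n`-th quantization error. -/
def quantErr (P : Measure ℝ) (n : ℕ) : ℝ :=
  sInf {v | ∃ A : Set ℝ, A.Finite ∧ A.Nonempty ∧ A.ncard ≤ n ∧ v = err P A}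

/-- An optimal set of `n`-means. -/
def IsOptimal (P : Measure ℝ) (n : ℕ) (A : Set ℝ) : Prop :=
  A.Finite ∧ A.Nonempty ∧ A.ncard ≤ n ∧ err P A = quantErr P n

/-- The Voronoi region of `a` with respect to `A`. -/
def voronoi (A : Set ℝ) (a : ℝ) : Set ℝ := {x | ∀ b ∈ A, |x - a| ≤ |x - b|}

/-- `α(ℓ) = {a(ω) : p_ω = 2^{-ℓ}} ∪ {a(ω,∞) : p_ω = 2^{-ℓ}}`. -/
def alphaSet (l : ℕ) : Set ℝ :=
  {x | ∃ ω : List ℕ, IsWord ω ∧ pword ω = (2 : ℝ)⁻¹ ^ l ∧ (x = aw ω ∨ x = awInf ω)}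

/-- The set `α_n(I)` built from `α(ℓ)` and `I ⊆ α(ℓ)`. -/
def alphaNI (l : ℕ) (I : Set ℝ) : Set ℝ :=
  (alphaSet l \ I)
    ∪ {x | ∃ ω : List ℕ, IsWord ω ∧ pword ω = (2 : ℝ)⁻¹ ^ l ∧ aw ω ∈ I ∧
        (x = aw (ω ++ [1]) ∨ x = awInf (ω ++ [1]))}
    ∪ {x | ∃ ω : List ℕ, IsWord ω ∧ pword ω = (2 : ℝ)⁻¹ ^ l ∧ awInf ω ∈ I ∧
        (x = aw (wordInc ω 1) ∨ x = awInf (wordInc ω 1))}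


section AuxCondTail

lemma smap_eq (i : ℕ) (x : ℝ) :
    Smap (i + 1) x = x * ((3:ℝ) ^ (i + 1))⁻¹ + (1 - ((3:ℝ) ^ i)⁻¹) := by
  simp only [Smap, div_eq_mul_inv, one_div, Nat.add_sub_cancel]
  ring

lemma smap_measurable (j : ℕ) : Measurable (Smap j) := by
  unfold Smap; fun_prop

lemma jset_compact (j : ℕ) : IsCompact (Jset j) :=
  isCompact_Icc.image (by unfold Smap; fun_prop)

lemma one_le_three_pow (i : ℕ) : (1:ℝ) ≤ 3 ^ i := by
  induction i with
  | zero => norm_num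
  | succ n ih => rw [pow_succ]; nlinarith

lemma mem_Jset_lb {i : ℕ} {x : ℝ} (hx : x ∈ Jset (i + 1)) : 1 - ((3:ℝ) ^ i)⁻¹ ≤ x := by
  obtain ⟨t, ht, rfl⟩ := hx
  rw [smap_eq]
  have hc : (0:ℝ) < ((3:ℝ) ^ (i + 1))⁻¹ := by positivity
  nlinarith [ht.1, ht.2]

lemma mem_Jset_ub {i : ℕ} {x : ℝ} (hx : x ∈ Jset (i + 1)) :
    x ≤ 1 - ((3:ℝ) ^ i)⁻¹ + ((3:ℝ) ^ (i + 1))⁻¹ := by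
  obtain ⟨t, ht, rfl⟩ := hx
  rw [smap_eq]
  have hc : (0:ℝ) < ((3:ℝ) ^ (i + 1))⁻¹ := by positivity
  nlinarith [ht.1, ht.2]

lemma compl_Icc_null (P : Measure ℝ) [IsProbabilityMeasure P]
    (hsupp : P (Set.Icc 0 1) = 1) : P (Set.Icc (0:ℝ) 1)ᶜ = 0 := by
  rw [measure_compl measurableSet_Icc (measure_ne_top P _), hsupp, measure_univ, tsub_self]

lemma inv_three_pow_le_one (i : ℕ) : ((3:ℝ) ^ i)⁻¹ ≤ 1 :=
  inv_le_one_of_one_le₀ (one_le_three_pow i)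

lemma meas_decomp (P : Measure ℝ) (hself : SelfSim P) {B : Set ℝ} (hB : MeasurableSet B) :
    P B = ∑' i : ℕ, ((2:ℝ≥0∞) ^ (i + 1))⁻¹ * P (Smap (i + 1) ⁻¹' B) := by
  conv_lhs => rw [hself]
  rw [Measure.sum_apply _ hB]
  refine tsum_congr fun i => ?_
  rw [Measure.smul_apply, Measure.map_apply (smap_measurable _) hB, smul_eq_mul]

lemma lint_decomp (P : Measure ℝ) (hself : SelfSim P) {B : Set ℝ} (hB : MeasurableSet B) :
    ∫⁻ x in B, ENNReal.ofReal x ∂P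
      = ∑' i : ℕ, ((2:ℝ≥0∞) ^ (i + 1))⁻¹
          * ∫⁻ y in Smap (i + 1) ⁻¹' B, ENNReal.ofReal (Smap (i + 1) y) ∂P := by
  conv_lhs => rw [hself]
  rw [Measure.restrict_sum _ hB, lintegral_sum_measure]
  refine tsum_congr fun i => ?_
  rw [Measure.restrict_smul, lintegral_smul_measure,
    setLIntegral_map hB ENNReal.measurable_ofReal (smap_measurable _), smul_eq_mul]

lemma ae_mem_Icc (P : Measure ℝ) [IsProbabilityMeasure P] (hsupp : P (Set.Icc 0 1) = 1) :
    ∀ᵐ x ∂P, x ∈ Set.Icc (0:ℝ) 1 := by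
  have h : P (Set.Icc (0:ℝ) 1)ᶜ = 0 := by
    rw [measure_compl measurableSet_Icc (measure_ne_top P _), hsupp, measure_univ, tsub_self]
  rw [ae_iff]
  convert h using 2
  rfl

lemma lint_smap (P : Measure ℝ) [IsProbabilityMeasure P] (hsupp : P (Set.Icc 0 1) = 1)
    (i : ℕ) :
    ∫⁻ y, ENNReal.ofReal (Smap (i + 1) y) ∂P
      = ((3:ℝ≥0∞) ^ (i + 1))⁻¹ * (∫⁻ y, ENNReal.ofReal y ∂P)
        + ENNReal.ofReal (1 - ((3:ℝ) ^ i)⁻¹) := by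
  have hb : (0:ℝ) ≤ 1 - ((3:ℝ) ^ i)⁻¹ := by
    have h1 : ((3:ℝ) ^ i)⁻¹ ≤ 1 := by
      exact inv_le_one_of_one_le₀ (one_le_three_pow i)
    linarith
  have hinv : ENNReal.ofReal (((3:ℝ) ^ (i + 1))⁻¹) = ((3:ℝ≥0∞) ^ (i + 1))⁻¹ := by
    rw [ENNReal.ofReal_inv_of_pos (by positivity), ENNReal.ofReal_pow (by norm_num)]
    norm_num
  have h1 : ∀ᵐ y ∂P, ENNReal.ofReal (Smap (i + 1) y)
      = ((3:ℝ≥0∞) ^ (i + 1))⁻¹ * ENNReal.ofReal y + ENNReal.ofReal (1 - ((3:ℝ) ^ i)⁻¹) := by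
    filter_upwards [ae_mem_Icc P hsupp] with y hy
    have h0 : (0:ℝ) ≤ y := hy.1
    rw [smap_eq, ENNReal.ofReal_add (by positivity) hb, ENNReal.ofReal_mul h0, hinv, mul_comm]
  rw [lintegral_congr_ae h1, lintegral_add_right _ measurable_const,
    lintegral_const_mul _ ENNReal.measurable_ofReal, lintegral_const, measure_univ, mul_one]

lemma lint_le_one (P : Measure ℝ) [IsProbabilityMeasure P] (hsupp : P (Set.Icc 0 1) = 1) :
    (∫⁻ y, ENNReal.ofReal y ∂P) ≤ 1 := by
  calc ∫⁻ y, ENNReal.ofReal y ∂P ≤ ∫⁻ _, 1 ∂P := by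
        refine lintegral_mono_ae ?_
        filter_upwards [ae_mem_Icc P hsupp] with y hy
        exact ENNReal.ofReal_le_one.2 hy.2
    _ = 1 := by simp

/-- The mean of `P` is `1/2`. -/
lemma lint_eq_half (P : Measure ℝ) [IsProbabilityMeasure P]
    (hsupp : P (Set.Icc 0 1) = 1) (hself : SelfSim P) :
    (∫⁻ y, ENNReal.ofReal y ∂P) = ENNReal.ofReal (1/2) := by
  set L := ∫⁻ y, ENNReal.ofReal y ∂P with hL
  have hLfin : L ≠ ⊤ := ((lint_le_one P hsupp).trans_lt (by norm_num)).ne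
  have hLeq : L = ∑' i : ℕ, ((2:ℝ≥0∞) ^ (i + 1))⁻¹
      * (((3:ℝ≥0∞) ^ (i + 1))⁻¹ * L + ENNReal.ofReal (1 - ((3:ℝ) ^ i)⁻¹)) := by
    have h := lint_decomp P hself MeasurableSet.univ
    simp only [Measure.restrict_univ, Set.preimage_univ] at h
    conv_lhs => rw [hL, h]
    exact tsum_congr fun i => by rw [lint_smap P hsupp i, ← hL]
  have hterm : ∀ i : ℕ, (((2:ℝ≥0∞) ^ (i + 1))⁻¹
      * (((3:ℝ≥0∞) ^ (i + 1))⁻¹ * L + ENNReal.ofReal (1 - ((3:ℝ) ^ i)⁻¹))).toReal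
      = ((2:ℝ)⁻¹) ^ (i + 1) * (((3:ℝ)⁻¹) ^ (i + 1) * L.toReal + (1 - ((3:ℝ) ^ i)⁻¹)) := by
    intro i
    have hb : (0:ℝ) ≤ 1 - ((3:ℝ) ^ i)⁻¹ := by
      have h1 : ((3:ℝ) ^ i)⁻¹ ≤ 1 := by
        exact inv_le_one_of_one_le₀ (one_le_three_pow i)
      linarith
    rw [ENNReal.toReal_mul, ENNReal.toReal_add (by finiteness) (by finiteness),
      ENNReal.toReal_mul, ENNReal.toReal_ofReal hb]
    simp [ENNReal.toReal_inv, inv_pow]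
  set l := L.toReal with hl
  have hreq : l = ∑' i : ℕ, ((2:ℝ)⁻¹) ^ (i + 1)
      * (((3:ℝ)⁻¹) ^ (i + 1) * l + (1 - ((3:ℝ) ^ i)⁻¹)) := by
    conv_lhs => rw [hl, hLeq]
    rw [ENNReal.tsum_toReal_eq (fun i => by finiteness)]
    exact tsum_congr hterm
  have hs6 : Summable (fun i : ℕ => ((6:ℝ)⁻¹) ^ i) :=
    summable_geometric_of_lt_one (by norm_num) (by norm_num)
  have hs2 : Summable (fun i : ℕ => ((2:ℝ)⁻¹) ^ i) :=
    summable_geometric_of_lt_one (by norm_num) (by norm_num)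
  have ht6 : ∑' i : ℕ, ((6:ℝ)⁻¹) ^ i = 6/5 := by
    rw [tsum_geometric_of_lt_one (by norm_num) (by norm_num)]; norm_num
  have ht2 : ∑' i : ℕ, ((2:ℝ)⁻¹) ^ i = 2 := by
    rw [tsum_geometric_of_lt_one (by norm_num) (by norm_num)]; norm_num
  have hsplit : ∀ i : ℕ, ((2:ℝ)⁻¹) ^ (i + 1)
      * (((3:ℝ)⁻¹) ^ (i + 1) * l + (1 - ((3:ℝ) ^ i)⁻¹))
      = (l/6) * ((6:ℝ)⁻¹) ^ i + ((1/2) * ((2:ℝ)⁻¹) ^ i - (1/2) * ((6:ℝ)⁻¹) ^ i) := by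
    intro i
    have h6 : ((6:ℝ)⁻¹) ^ i = ((2:ℝ)⁻¹) ^ i * ((3:ℝ)⁻¹) ^ i := by
      rw [← mul_pow]; norm_num
    have h3 : ((3:ℝ) ^ i)⁻¹ = ((3:ℝ)⁻¹) ^ i := by rw [inv_pow]
    rw [h3, h6]; ring
  rw [tsum_congr hsplit, Summable.tsum_add ((hs6.mul_left _))
      (((hs2.mul_left _)).sub ((hs6.mul_left _))),
    Summable.tsum_sub (hs2.mul_left _) (hs6.mul_left _),
    tsum_mul_left, tsum_mul_left, tsum_mul_left, ht6, ht2] at hreq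
  have hlval : l = 1/2 := by linarith
  rw [hL] at hLfin ⊢
  rw [← ENNReal.ofReal_toReal hLfin, ← hl, hlval]

end AuxCondTail

theorem conditional_expectation_tail (P : Measure ℝ) [IsProbabilityMeasure P]
    (hsupp : P (Set.Icc 0 1) = 1) (hself : SelfSim P) (k : ℕ) (hk : 1 ≤ k) :
    (∫ x in ⋃ j ∈ {j : ℕ | k ≤ j}, Jset j, x ∂P)
        / (P (⋃ j ∈ {j : ℕ | k ≤ j}, Jset j)).toReal
      = 1 - 1 / (2 * 3 ^ (k - 1)) := by
  obtain ⟨m, rfl⟩ : ∃ m, k = m + 1 := ⟨k - 1, (Nat.succ_pred_eq_of_pos hk).symm⟩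
  set A : Set ℝ := ⋃ j ∈ {j : ℕ | m + 1 ≤ j}, Jset j with hAdef
  have hA : MeasurableSet A :=
    MeasurableSet.biUnion (Set.to_countable _) fun j _ => (jset_compact j).measurableSet
  have hmemA : ∀ x ∈ A, ∃ n : ℕ, m ≤ n ∧ x ∈ Jset (n + 1) := by
    intro x hx
    simp only [hAdef, Set.mem_iUnion, Set.mem_setOf_eq, exists_prop] at hx
    obtain ⟨j, hj, hxj⟩ := hx
    obtain ⟨n, rfl⟩ : ∃ n, j = n + 1 :=
      ⟨j - 1, (Nat.succ_pred_eq_of_pos (Nat.lt_of_lt_of_le (Nat.succ_pos m) hj)).symm⟩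
    exact ⟨n, Nat.succ_le_succ_iff.mp hj, hxj⟩
  have hJsub : ∀ n : ℕ, m ≤ n → Jset (n + 1) ⊆ A := by
    intro n hn x hx
    exact Set.mem_biUnion (Nat.succ_le_succ hn) hx
  have hpre_one : ∀ i : ℕ, m ≤ i → Set.Icc (0:ℝ) 1 ⊆ Smap (i + 1) ⁻¹' A :=
    fun i hi y hy => hJsub i hi (Set.mem_image_of_mem _ hy)
  have hpre_empty : ∀ i : ℕ, i < m → Smap (i + 1) ⁻¹' A ∩ Set.Icc 0 1 = ∅ := by
    intro i him
    rw [Set.eq_empty_iff_forall_notMem]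
    rintro y ⟨hyA, hyI⟩
    obtain ⟨n, hn, hxn⟩ := hmemA _ hyA
    have h1 := mem_Jset_lb hxn
    have h2 := mem_Jset_ub (Set.mem_image_of_mem _ hyI : Smap (i + 1) y ∈ Jset (i + 1))
    have h3 : ((3:ℝ) ^ n)⁻¹ ≤ ((3:ℝ) ^ (i + 1))⁻¹ := by
      gcongr
      · norm_num
      · omega
    have h4 : ((3:ℝ) ^ i)⁻¹ = 3 * ((3:ℝ) ^ (i + 1))⁻¹ := by
      rw [pow_succ]
      have : (0:ℝ) < 3 ^ i := by positivity
      field_simp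
    have h5 : (0:ℝ) < ((3:ℝ) ^ (i + 1))⁻¹ := by positivity
    linarith
  have hpre0 : ∀ i : ℕ, i < m → P (Smap (i + 1) ⁻¹' A) = 0 := by
    intro i him
    rw [← measure_inter_conull (compl_Icc_null P hsupp), hpre_empty i him, measure_empty]
  -- the measure of A
  have hPA : P A = ∑' i : ℕ, (if m ≤ i then ((2:ℝ≥0∞) ^ (i + 1))⁻¹ else 0) := by
    rw [meas_decomp P hself hA]
    refine tsum_congr fun i => ?_
    by_cases hi : m ≤ i
    · rw [if_pos hi]
      have h1 : P (Smap (i + 1) ⁻¹' A) = 1 := by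
        refine le_antisymm prob_le_one ?_
        calc (1:ℝ≥0∞) = P (Set.Icc 0 1) := hsupp.symm
          _ ≤ P (Smap (i + 1) ⁻¹' A) := measure_mono (hpre_one i hi)
      rw [h1, mul_one]
    · rw [if_neg hi, hpre0 i (not_le.mp hi), mul_zero]
  -- the lintegral over A
  have hT : ∫⁻ x in A, ENNReal.ofReal x ∂P
      = ∑' i : ℕ, (if m ≤ i then
          ((2:ℝ≥0∞) ^ (i + 1))⁻¹ * (((3:ℝ≥0∞) ^ (i + 1))⁻¹ * ENNReal.ofReal (1/2)
            + ENNReal.ofReal (1 - ((3:ℝ) ^ i)⁻¹)) else 0) := by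
    rw [lint_decomp P hself hA]
    refine tsum_congr fun i => ?_
    by_cases hi : m ≤ i
    · rw [if_pos hi]
      have hfull : P.restrict (Smap (i + 1) ⁻¹' A) = P :=
        Measure.restrict_eq_self_of_ae_mem (by
          filter_upwards [ae_mem_Icc P hsupp] with y hy
          exact hpre_one i hi hy)
      congr 1
      rw [hfull, lint_smap P hsupp i, lint_eq_half P hsupp hself]
    · rw [if_neg hi, setLIntegral_measure_zero _ _ (hpre0 i (not_le.mp hi)), mul_zero]
  -- geometric series facts
  have hs6 : Summable (fun i : ℕ => ((6:ℝ)⁻¹) ^ i) :=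
    summable_geometric_of_lt_one (by norm_num) (by norm_num)
  have hs2 : Summable (fun i : ℕ => ((2:ℝ)⁻¹) ^ i) :=
    summable_geometric_of_lt_one (by norm_num) (by norm_num)
  have ht6 : ∑' i : ℕ, ((6:ℝ)⁻¹) ^ i = 6/5 := by
    rw [tsum_geometric_of_lt_one (by norm_num) (by norm_num)]; norm_num
  have ht2 : ∑' i : ℕ, ((2:ℝ)⁻¹) ^ i = 2 := by
    rw [tsum_geometric_of_lt_one (by norm_num) (by norm_num)]; norm_num
  -- toReal of the measure of A
  have hPAreal : (P A).toReal = ∑' i : ℕ, (if m ≤ i then ((2:ℝ) ^ (i + 1))⁻¹ else 0) := by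
    rw [hPA, ENNReal.tsum_toReal_eq (fun i => by split_ifs <;> finiteness)]
    refine tsum_congr fun i => ?_
    split_ifs
    · simp [ENNReal.toReal_inv]
    · simp
  have hsum2 : Summable (fun i : ℕ => if m ≤ i then ((2:ℝ) ^ (i + 1))⁻¹ else 0) := by
    refine Summable.of_nonneg_of_le (fun i => ?_) (fun i => ?_) (hs2.mul_left (2:ℝ)⁻¹)
    · split_ifs <;> positivity
    · split_ifs
      · exact le_of_eq (by rw [← inv_pow, pow_succ, mul_comm])
      · positivity
  have hPAval : (P A).toReal = ((2:ℝ) ^ (m + 1))⁻¹ * 2 := by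
    rw [hPAreal, ← Summable.sum_add_tsum_nat_add m hsum2,
      Finset.sum_eq_zero (fun i hi => if_neg (by simp only [Finset.mem_range] at hi; omega)),
      zero_add]
    have hshift : ∀ i : ℕ, (if m ≤ i + m then ((2:ℝ) ^ (i + m + 1))⁻¹ else 0)
        = ((2:ℝ) ^ (m + 1))⁻¹ * ((2:ℝ)⁻¹) ^ i := by
      intro i
      rw [if_pos (Nat.le_add_left m i), show i + m + 1 = (m + 1) + i from by omega,
        pow_add, mul_inv, inv_pow]
    rw [tsum_congr hshift, tsum_mul_left, ht2]
  -- toReal of the lintegral over A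
  have hb : ∀ i : ℕ, (0:ℝ) ≤ 1 - ((3:ℝ) ^ i)⁻¹ := fun i => by
    have := inv_three_pow_le_one i; linarith
  set g : ℕ → ℝ := fun i => if m ≤ i then
      ((2:ℝ) ^ (i + 1))⁻¹ * (((3:ℝ) ^ (i + 1))⁻¹ * (1/2) + (1 - ((3:ℝ) ^ i)⁻¹)) else 0 with hg
  have hTreal : (∫⁻ x in A, ENNReal.ofReal x ∂P).toReal = ∑' i, g i := by
    rw [hT, ENNReal.tsum_toReal_eq (fun i => by split_ifs <;> finiteness)]
    refine tsum_congr fun i => ?_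
    simp only [hg]
    split_ifs
    · rw [ENNReal.toReal_mul, ENNReal.toReal_add (by finiteness) (by finiteness),
        ENNReal.toReal_mul, ENNReal.toReal_ofReal (hb i), ENNReal.toReal_ofReal (by norm_num)]
      simp [ENNReal.toReal_inv]
    · simp
  have hsumg : Summable g := by
    refine Summable.of_nonneg_of_le (fun i => ?_) (fun i => ?_) ((hs2.mul_left (2:ℝ)⁻¹).mul_left 2)
    · simp only [hg]
      split_ifs
      · exact mul_nonneg (by positivity) (add_nonneg (by positivity) (hb i))
      · exact le_refl 0
    · simp only [hg]
      split_ifs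
      · have e : ((2:ℝ) ^ (i + 1))⁻¹ = (2:ℝ)⁻¹ * ((2:ℝ)⁻¹) ^ i := by
          rw [← inv_pow, pow_succ, mul_comm]
        have hi3 : ((3:ℝ) ^ (i + 1))⁻¹ ≤ 1 := inv_three_pow_le_one (i + 1)
        have hi3' : (0:ℝ) < ((3:ℝ) ^ i)⁻¹ := by positivity
        have hp : (0:ℝ) ≤ ((2:ℝ)⁻¹ : ℝ) ^ i := by positivity
        rw [e]
        nlinarith [inv_pos.2 (pow_pos (show (0:ℝ) < 3 by norm_num) (i + 1))]
      · positivity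
  have h6 : ∀ j : ℕ, ((6:ℝ) ^ j)⁻¹ = ((2:ℝ) ^ j)⁻¹ * ((3:ℝ) ^ j)⁻¹ := fun j => by
    rw [← mul_inv, ← mul_pow]; norm_num
  have hshiftg : ∀ i : ℕ, g (i + m)
      = ((1/2) * ((6:ℝ) ^ (m + 1))⁻¹ - (1/2) * ((6:ℝ) ^ m)⁻¹) * ((6:ℝ)⁻¹) ^ i
        + ((2:ℝ) ^ (m + 1))⁻¹ * ((2:ℝ)⁻¹) ^ i := by
    intro i
    simp only [hg]
    rw [if_pos (Nat.le_add_left m i),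
      show (2:ℝ) ^ (i + m + 1) = 2 ^ (m + 1) * 2 ^ i from by
        rw [show i + m + 1 = (m + 1) + i from by omega, pow_add],
      show (3:ℝ) ^ (i + m + 1) = 3 ^ (m + 1) * 3 ^ i from by
        rw [show i + m + 1 = (m + 1) + i from by omega, pow_add],
      show (3:ℝ) ^ (i + m) = 3 ^ m * 3 ^ i from by
        rw [show i + m = m + i from by omega, pow_add]]
    simp only [inv_pow, h6, mul_inv]
    have p2i : ((2:ℝ) ^ i) ≠ 0 := by positivity
    have p3i : ((3:ℝ) ^ i) ≠ 0 := by positivity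
    have p2m : ((2:ℝ) ^ m) ≠ 0 := by positivity
    have p3m : ((3:ℝ) ^ m) ≠ 0 := by positivity
    field_simp
    ring
  have hTval : (∫⁻ x in A, ENNReal.ofReal x ∂P).toReal
      = ((1/2) * ((6:ℝ) ^ (m + 1))⁻¹ - (1/2) * ((6:ℝ) ^ m)⁻¹) * (6/5)
        + ((2:ℝ) ^ (m + 1))⁻¹ * 2 := by
    rw [hTreal, ← Summable.sum_add_tsum_nat_add m hsumg,
      Finset.sum_eq_zero (fun i hi => by
        simp only [hg]
        exact if_neg (by simp only [Finset.mem_range] at hi; omega)),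
      zero_add, tsum_congr hshiftg,
      Summable.tsum_add (hs6.mul_left _) (hs2.mul_left _), tsum_mul_left, tsum_mul_left, ht6, ht2]
  -- convert the Bochner integral to the lintegral
  have hnonneg : 0 ≤ᵐ[P.restrict A] fun x : ℝ => x := by
    refine (ae_restrict_iff' hA).2 (Filter.Eventually.of_forall fun x hx => ?_)
    obtain ⟨n, hn, hxn⟩ := hmemA x hx
    have h1 := mem_Jset_lb hxn
    have h2 := inv_three_pow_le_one n
    simp only [Pi.zero_apply]
    linarith
  have hIntA : ∫ x in A, x ∂P = (∫⁻ x in A, ENNReal.ofReal x ∂P).toReal :=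
    integral_eq_lintegral_of_nonneg_ae hnonneg measurable_id.aestronglyMeasurable
  rw [hIntA, hTval, hPAval, Nat.add_sub_cancel]
  have p2m : ((2:ℝ) ^ m) ≠ 0 := by positivity
  have p3m : ((3:ℝ) ^ m) ≠ 0 := by positivity
  simp only [pow_succ, h6, mul_inv]
  field_simp
  ring



end
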